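/- Let S be a commutative semiring equipped with an O∞-Euclidean norm. Then every subtractive ideal of S is principal. -/
import Mathlib


/-- In a commutative semiring with an O∞-Euclidean norm, every
subtractive ideal is principal. -/
theorem subtractive_ideal_principal_of_euclidean {S O : Type*} [CommSemiring S] [Nontrivial S]
    [LinearOrder O] [WellFoundedLT O] [NoMaxOrder O]
    (δ : S → WithTop O)
    (h1 : ∀ s : S, δ s = ⊤ ↔ s = 0)
    (h2 : ∀ a b : S, b ≠ 0 → ∃ q r : S, a = b * q + r ∧ (r = 0 ∨ δ r < δ b))
    (I : Ideal S)
    (hsub : ∀ a b : S, a + b ∈ I → a ∈ I → b ∈ I) :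
    ∃ a : S, I = Ideal.span {a} := by
  by_cases hI : I = ⊥
  · exact ⟨0, by rw [hI, Ideal.span_singleton_eq_bot.mpr rfl]⟩
  · obtain ⟨b0, hb0I, hb0⟩ : ∃ b ∈ I, b ≠ 0 := by
      by_contra h
      push_neg at h
      exact hI (by ext x; simp only [Ideal.mem_bot]; exact ⟨fun hx => h x hx, fun hx => hx ▸ I.zero_mem⟩)
    have hwf : WellFounded ((· < ·) : WithTop O → WithTop O → Prop) := wellFounded_lt
    set T : Set (WithTop O) := {x | ∃ b, b ∈ I ∧ b ≠ 0 ∧ δ b = x} with hT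
    obtain ⟨m, hmT, hmin⟩ := hwf.has_min T ⟨δ b0, b0, hb0I, hb0, rfl⟩
    obtain ⟨b, hbI, hb, hδb⟩ := hmT
    refine ⟨b, le_antisymm ?_ ?_⟩
    · intro x hx
      obtain ⟨q, r, hx', hr⟩ := h2 x b hb
      have hbqI : b * q ∈ I := I.mul_mem_right q hbI
      have hrI : r ∈ I := hsub (b * q) r (hx' ▸ hx) hbqI
      rcases hr with hr0 | hrlt
      · rw [Ideal.mem_span_singleton']
        exact ⟨q, by rw [hx', hr0, add_zero, mul_comm]⟩
      · exfalso
        have hr0 : r ≠ 0 := by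
          intro h; rw [h, (h1 0).mpr rfl] at hrlt; exact (not_top_lt hrlt)
        exact hmin (δ r) ⟨r, hrI, hr0, rfl⟩ (hδb ▸ hrlt)
    · rw [Ideal.span_le]
      simpa using hbI
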